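/- (Closed form of the aggregator's optimal unconstrained price.) Let S = Σ_{j=1}^n (X_j + 1/b_e^j) and K = Σ_{j=1}^n k_e^j. Then p̂ = √(r_e·K/S) is the unique global maximizer of V_e on (0, ∞): for every p > 0 with p ≠ p̂ one has V_e(p) < V_e(p̂). -/

import Mathlib

/-- The electricity aggregator's profit in the interior-response regime:
`V_e(p) = (r_e − p)·Σ_j (X_j + 1/b_e^j − k_e^j/p)` with `b_e^j = (e−1)/X_j`. -/
noncomputable def aggV (n : ℕ) (X k : Fin n → ℝ) (re p : ℝ) : ℝ :=
  (re - p) * ∑ j, (X j + 1 / ((Real.exp 1 - 1) / X j) - k j / p)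

/-- Closed form of the aggregator's optimal unconstrained price:
`p̂ = √(r_e·K/S)` is the unique global maximizer of `V_e` on `(0, ∞)`, where
`S = Σ_j (X_j + 1/b_e^j)` and `K = Σ_j k_e^j`. -/
theorem stmt_13 (n : ℕ) (hn : 1 ≤ n) (X k : Fin n → ℝ)
    (hX : ∀ j, 0 < X j) (hk : ∀ j, 0 < k j) (re : ℝ) (hre : 0 < re)
    (S K phat : ℝ)
    (hS : S = ∑ j, (X j + 1 / ((Real.exp 1 - 1) / X j)))
    (hK : K = ∑ j, k j)
    (hphat : phat = Real.sqrt (re * K / S)) :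
    ∀ p : ℝ, 0 < p → p ≠ phat → aggV n X k re p < aggV n X k re phat := by
  have he : (1:ℝ) < Real.exp 1 := by
    have := Real.add_one_lt_exp (x := 1) one_ne_zero
    linarith
  haveI : NeZero n := ⟨by omega⟩
  have hnonempty : (Finset.univ : Finset (Fin n)).Nonempty := Finset.univ_nonempty
  have hSpos : 0 < S := by
    rw [hS]
    apply Finset.sum_pos _ hnonempty
    intro j _
    have h1 : 0 < (Real.exp 1 - 1) / X j := div_pos (by linarith) (hX j)
    have := hX j
    positivity
  have hKpos : 0 < K := by
    rw [hK]; exact Finset.sum_pos (fun j _ => hk j) hnonempty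
  have hquot : 0 < re * K / S := by positivity
  have hphatpos : 0 < phat := by rw [hphat]; exact Real.sqrt_pos.mpr hquot
  have hsq : phat ^ 2 = re * K / S := by
    rw [hphat, sq, Real.mul_self_sqrt hquot.le]
  have hsqS : phat ^ 2 * S = re * K := by
    rw [hsq]
    field_simp
  have key : ∀ q : ℝ, aggV n X k re q = (re - q) * (S - K / q) := by
    intro q
    simp only [aggV, Finset.sum_sub_distrib, hS, hK, Finset.sum_div]
  intro p hp hne
  rw [key, key]
  have hdiff : (re - phat) * (S - K / phat) - (re - p) * (S - K / p)
      = S * (p - phat) ^ 2 / p := by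
    field_simp
    linear_combination (p - phat) * hsqS
  have hpos : 0 < S * (p - phat) ^ 2 / p := by
    have h2 : (0:ℝ) < (p - phat) ^ 2 := by
      have := sub_ne_zero.mpr hne
      positivity
    positivity
  linarith
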